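/- arXiv:1710.05250 — 3 statements merged into one kernel-verified Lean document; each statement's English description precedes it below -/
import Mathlib

section
/- The semigroup S = ⟨x₁, x₂, x₃, x₄ | xᵢxⱼxₖ = 0; x₁² = x₄x₁; x₄² = x₁x₄; x₁x₂ = x₄x₂ = x₁x₃ = x₄x₃ = x₂x₁ = x₂x₃ = x₃x₂ = x₃x₄ = 0⟩ has knit degree exactly 3; in particular, none of x₁ − x₂, x₂ − x₃, x₃ − x₄, x₁ − x₂ − x₃, x₂ − x₃ − x₄ is a left path. -/
/-- The commuting graph of a semigroup: vertices are the non-central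
elements, two distinct vertices are adjacent iff they commute. -/
def CommutingGraph (S : Type*) [Semigroup S] :
    SimpleGraph {x : S // x ∉ Set.center S} where
  Adj a b := a ≠ b ∧ (a : S) * b = (b : S) * a
  symm := ⟨fun _ _ ⟨h, hc⟩ => ⟨h.symm, hc.symm⟩⟩
  loopless := ⟨fun _ ⟨h, _⟩ => h rfl⟩

/-- The free semigroup with zero on the four generators `x₁, x₂, x₃, x₄`. -/
abbrev W4 := WithZero (FreeSemigroup (Fin 4))

/-- The generator `xᵢ` (indexed from `0`, so `xv 0 = x₁`, …, `xv 3 = x₄`). -/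
def xv (i : Fin 4) : FreeSemigroup (Fin 4) := FreeSemigroup.of i

/-- The defining relations: `xᵢxⱼxₖ = 0` for all `i,j,k`; `x₁² = x₄x₁`;
`x₄² = x₁x₄`; `x₁x₂ = x₄x₂ = x₁x₃ = x₄x₃ = x₂x₁ = x₂x₃ = x₃x₂ = x₃x₄ = 0`. -/
def KnitRel : W4 → W4 → Prop := fun p q =>
  (∃ i j k : Fin 4, p = ((xv i * xv j * xv k : FreeSemigroup (Fin 4)) : W4) ∧ q = 0) ∨
  (p = ((xv 0 * xv 0 : FreeSemigroup (Fin 4)) : W4) ∧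
    q = ((xv 3 * xv 0 : FreeSemigroup (Fin 4)) : W4)) ∨
  (p = ((xv 3 * xv 3 : FreeSemigroup (Fin 4)) : W4) ∧
    q = ((xv 0 * xv 3 : FreeSemigroup (Fin 4)) : W4)) ∨
  (q = 0 ∧
    (p = ((xv 0 * xv 1 : FreeSemigroup (Fin 4)) : W4) ∨
     p = ((xv 3 * xv 1 : FreeSemigroup (Fin 4)) : W4) ∨
     p = ((xv 0 * xv 2 : FreeSemigroup (Fin 4)) : W4) ∨
     p = ((xv 3 * xv 2 : FreeSemigroup (Fin 4)) : W4) ∨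
     p = ((xv 1 * xv 0 : FreeSemigroup (Fin 4)) : W4) ∨
     p = ((xv 1 * xv 2 : FreeSemigroup (Fin 4)) : W4) ∨
     p = ((xv 2 * xv 1 : FreeSemigroup (Fin 4)) : W4) ∨
     p = ((xv 2 * xv 3 : FreeSemigroup (Fin 4)) : W4)))

/-- The congruence generated by the knit relations. -/
def KnitCon : Con W4 := conGen KnitRel

/-- The knit-degree-3 example semigroup. -/
def KnitS : Type := KnitCon.Quotient

instance : Semigroup KnitS := Con.semigroup _

/-- The image of the generator `xᵢ` in the semigroup (`e 0 = x₁`, …, `e 3 = x₄`). -/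
def e (i : Fin 4) : KnitS := ((xv i : W4) : KnitCon.Quotient)



inductive MM : Type
  | z | g1 | g2 | g3 | g4 | b14 | b41 | b24 | b31 | b22 | b33
  deriving DecidableEq

instance : Fintype MM :=
  Fintype.ofList [.z, .g1, .g2, .g3, .g4, .b14, .b41, .b24, .b31, .b22, .b33]
    (by intro x; cases x <;> simp)

def MM.mul : MM → MM → MM
  | .g1, .g1 => .b41
  | .g1, .g4 => .b14
  | .g4, .g1 => .b41
  | .g4, .g4 => .b14
  | .g2, .g2 => .b22
  | .g2, .g4 => .b24
  | .g3, .g3 => .b33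
  | .g3, .g1 => .b31
  | _, _ => .z

instance : Mul MM := ⟨MM.mul⟩
instance : Semigroup MM where
  mul_assoc := by decide

lemma MM.z_mul (a : MM) : MM.z * a = MM.z := by cases a <;> rfl
lemma MM.mul_z (a : MM) : a * MM.z = MM.z := by cases a <;> rfl

def phi0 : Fin 4 → MM := ![MM.g1, MM.g2, MM.g3, MM.g4]
def lm4 : FreeSemigroup (Fin 4) →ₙ* MM := FreeSemigroup.lift phi0
def fW : W4 → MM := WithZero.recZeroCoe MM.z lm4

lemma fW_zero : fW 0 = MM.z := rfl
lemma fW_coe (w : FreeSemigroup (Fin 4)) : fW ↑w = lm4 w := rfl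

lemma fW_mul (x y : W4) : fW (x * y) = fW x * fW y := by
  induction x with
  | none =>
    show fW (0 * y) = fW 0 * fW y
    rw [zero_mul, fW_zero, MM.z_mul]
  | some a =>
    induction y with
    | none =>
      show fW ((a : W4) * 0) = fW ↑a * fW 0
      rw [mul_zero, fW_zero, MM.mul_z]
    | some b =>
      show fW ((a : W4) * ↑b) = fW ↑a * fW ↑b
      rw [← WithZero.coe_mul, fW_coe, fW_coe, fW_coe, map_mul]

lemma lm4_two (i j : Fin 4) : lm4 (xv i * xv j) = phi0 i * phi0 j := by
  simp [lm4, xv, map_mul]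

lemma lm4_three (i j k : Fin 4) :
    lm4 (xv i * xv j * xv k) = phi0 i * phi0 j * phi0 k := by
  simp [lm4, xv, map_mul]

lemma knitCon_le : KnitCon ≤ Con.ker (⟨fW, fW_mul⟩ : W4 →ₙ* MM) := by
  apply Con.conGen_le.mpr
  rintro p q (⟨i, j, k, rfl, rfl⟩ | ⟨rfl, rfl⟩ | ⟨rfl, rfl⟩ |
    ⟨rfl, (rfl | rfl | rfl | rfl | rfl | rfl | rfl | rfl)⟩)
  all_goals rw [Con.ker_rel, MulHom.coe_mk]
  · show fW _ = fW _
    rw [fW_coe, fW_zero, lm4_three]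
    revert i j k; decide
  all_goals show fW _ = fW _
  all_goals simp only [fW_coe, fW_zero, lm4_three, lm4_two]
  all_goals decide

lemma knit_eq {p q : W4} (h : KnitCon p q) : fW p = fW q := Con.le_def.mp knitCon_le h

def phi : KnitS → MM := fun s => Con.liftOn s fW (fun _ _ h => knit_eq h)

def cls : W4 → KnitS := fun x => (x : KnitCon.Quotient)

lemma phi_cls (x : W4) : phi (cls x) = fW x := rfl

lemma cls_mul (x y : W4) : cls x * cls y = cls (x * y) := rfl

lemma e_def (i : Fin 4) : e i = cls ↑(xv i) := rfl

lemma e_mul (i j : Fin 4) : e i * e j = cls ↑(xv i * xv j) := by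
  rw [e_def, e_def, cls_mul, WithZero.coe_mul]

lemma phi_e_mul (i j : Fin 4) : phi (e i * e j) = phi0 i * phi0 j := by
  rw [e_mul, phi_cls, fW_coe, lm4_two]

lemma rel_eq {p q : W4} (h : KnitRel p q) : cls p = cls q :=
  KnitCon.eq.mpr (ConGen.Rel.of _ _ h)

lemma long_zero (h a b : Fin 4) (l : List (Fin 4)) :
    cls ↑(⟨h, a :: b :: l⟩ : FreeSemigroup (Fin 4)) = cls 0 := by
  cases l with
  | nil => exact rel_eq (Or.inl ⟨h, a, b, rfl, rfl⟩)
  | cons c l' =>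
    have h1 : (⟨h, a :: b :: c :: l'⟩ : FreeSemigroup (Fin 4)) =
        (xv h * xv a * xv b) * ⟨c, l'⟩ := rfl
    rw [h1, WithZero.coe_mul, ← cls_mul, rel_eq (Or.inl ⟨h, a, b, rfl, rfl⟩),
      cls_mul, zero_mul]

lemma long_zero' (h : Fin 4) (t : List (Fin 4)) (ht : 2 ≤ t.length) :
    cls ↑(⟨h, t⟩ : FreeSemigroup (Fin 4)) = cls 0 := by
  match t, ht with
  | a :: b :: l, _ => exact long_zero h a b l

lemma mul_long (h a : Fin 4) (l : List (Fin 4)) (s : KnitS) :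
    cls ↑(⟨h, a :: l⟩ : FreeSemigroup (Fin 4)) * s = cls 0 ∧
      s * cls ↑(⟨h, a :: l⟩ : FreeSemigroup (Fin 4)) = cls 0 := by
  induction s using Con.induction_on with
  | H x =>
    induction x with
    | none =>
      show cls _ * cls 0 = cls 0 ∧ cls 0 * cls _ = cls 0
      rw [cls_mul, cls_mul, mul_zero, zero_mul]
      exact ⟨rfl, rfl⟩
    | some v =>
      obtain ⟨vh, vl⟩ := v
      constructor
      · show cls _ * cls ↑(⟨vh, vl⟩ : FreeSemigroup (Fin 4)) = cls 0
        rw [cls_mul, ← WithZero.coe_mul]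
        exact long_zero' _ _ (by simp [FreeSemigroup.tail_mul]; omega)
      · show cls ↑(⟨vh, vl⟩ : FreeSemigroup (Fin 4)) * cls _ = cls 0
        rw [cls_mul, ← WithZero.coe_mul]
        exact long_zero' _ _ (by simp [FreeSemigroup.tail_mul]; omega)

lemma classify (s : KnitS) : (∃ i, s = e i) ∨ ∀ t : KnitS, s * t = t * s := by
  induction s using Con.induction_on with
  | H x =>
    induction x with
    | none =>
      right
      intro t
      induction t using Con.induction_on with
      | H y =>
        show cls 0 * cls y = cls y * cls 0
        rw [cls_mul, cls_mul, zero_mul, mul_zero]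
    | some w =>
      obtain ⟨h, l⟩ := w
      cases l with
      | nil => exact Or.inl ⟨h, rfl⟩
      | cons a l' =>
        right
        intro t
        have := mul_long h a l' t
        show cls ↑(⟨h, a :: l'⟩ : FreeSemigroup (Fin 4)) * t =
          t * cls ↑(⟨h, a :: l'⟩ : FreeSemigroup (Fin 4))
        rw [this.1, this.2]

lemma gen_of (s : KnitS) (hs : s ∉ Set.center KnitS) : ∃ i, s = e i := by
  rcases classify s with h | h
  · exact h
  · exact absurd (Semigroup.mem_center_iff.mpr fun g => (h g).symm) hs

lemma phi_e (i : Fin 4) : phi (e i) = phi0 i := rfl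

lemma phi0_inj : ∀ i j : Fin 4, phi0 i = phi0 j → i = j := by decide

lemma e_ne {i j : Fin 4} (hij : i ≠ j) : e i ≠ e j := fun h =>
  hij (phi0_inj i j (by rw [← phi_e, ← phi_e, h]))

lemma e_not_central (i : Fin 4) : e i ∉ Set.center KnitS := by
  intro hmem
  rw [Semigroup.mem_center_iff] at hmem
  have key : ∀ j : Fin 4, e j * e i = e i * e j := fun j => hmem (e j)
  fin_cases i
  · have := congrArg phi (key 2); rw [phi_e_mul, phi_e_mul] at this; exact absurd this (by decide)
  · have := congrArg phi (key 3); rw [phi_e_mul, phi_e_mul] at this; exact absurd this (by decide)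
  · have := congrArg phi (key 0); rw [phi_e_mul, phi_e_mul] at this; exact absurd this (by decide)
  · have := congrArg phi (key 0); rw [phi_e_mul, phi_e_mul] at this; exact absurd this (by decide)

lemma h01 : e 0 * e 1 = cls 0 := by
  rw [e_mul]; exact rel_eq (Or.inr (Or.inr (Or.inr ⟨rfl, Or.inl rfl⟩)))
lemma h31 : e 3 * e 1 = cls 0 := by
  rw [e_mul]; exact rel_eq (Or.inr (Or.inr (Or.inr ⟨rfl, Or.inr (Or.inl rfl)⟩)))
lemma h02 : e 0 * e 2 = cls 0 := by
  rw [e_mul]; exact rel_eq (Or.inr (Or.inr (Or.inr ⟨rfl, Or.inr (Or.inr (Or.inl rfl))⟩)))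
lemma h32 : e 3 * e 2 = cls 0 := by
  rw [e_mul]
  exact rel_eq (Or.inr (Or.inr (Or.inr ⟨rfl, Or.inr (Or.inr (Or.inr (Or.inl rfl)))⟩)))
lemma h10 : e 1 * e 0 = cls 0 := by
  rw [e_mul]
  exact rel_eq (Or.inr (Or.inr (Or.inr ⟨rfl, Or.inr (Or.inr (Or.inr (Or.inr (Or.inl rfl))))⟩)))
lemma h12 : e 1 * e 2 = cls 0 := by
  rw [e_mul]
  exact rel_eq (Or.inr (Or.inr (Or.inr
    ⟨rfl, Or.inr (Or.inr (Or.inr (Or.inr (Or.inr (Or.inl rfl)))))⟩)))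
lemma h21 : e 2 * e 1 = cls 0 := by
  rw [e_mul]
  exact rel_eq (Or.inr (Or.inr (Or.inr
    ⟨rfl, Or.inr (Or.inr (Or.inr (Or.inr (Or.inr (Or.inr (Or.inl rfl))))))⟩)))
lemma h23 : e 2 * e 3 = cls 0 := by
  rw [e_mul]
  exact rel_eq (Or.inr (Or.inr (Or.inr
    ⟨rfl, Or.inr (Or.inr (Or.inr (Or.inr (Or.inr (Or.inr (Or.inr rfl))))))⟩)))
lemma h00 : e 0 * e 0 = e 3 * e 0 := by
  rw [e_mul, e_mul]; exact rel_eq (Or.inr (Or.inl ⟨rfl, rfl⟩))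
lemma h33 : e 3 * e 3 = e 0 * e 3 := by
  rw [e_mul, e_mul]; exact rel_eq (Or.inr (Or.inr (Or.inl ⟨rfl, rfl⟩)))

lemma L1 : ∀ i j : Fin 4, i ≠ j → phi0 i * phi0 j = phi0 j * phi0 i →
    phi0 i * phi0 i = phi0 j * phi0 i → phi0 i * phi0 j = phi0 j * phi0 j → False := by
  decide

lemma L2 : ∀ i j k : Fin 4, i ≠ k → phi0 i * phi0 j = phi0 j * phi0 i →
    phi0 j * phi0 k = phi0 k * phi0 j → phi0 i * phi0 i = phi0 k * phi0 i →
    phi0 i * phi0 j = phi0 k * phi0 j → phi0 i * phi0 k = phi0 k * phi0 k → False := by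
  decide

/-- `a : Fin (m+1) → S` is a left path of length `m`: consecutive entries are
distinct and commute, no entry is central, `a 0 ≠ a m`, and
`a 0 * a i = a m * a i` for all `i`. -/
def IsLeftPath (S : Type*) [Semigroup S] (m : ℕ) (a : Fin (m + 1) → S) : Prop :=
  1 ≤ m ∧
  (∀ i, a i ∉ Set.center S) ∧
  (∀ i : Fin m, a i.castSucc ≠ a i.succ ∧
    a i.castSucc * a i.succ = a i.succ * a i.castSucc) ∧
  a 0 ≠ a (Fin.last m) ∧
  (∀ i, a 0 * a i = a (Fin.last m) * a i)

lemma lower_bound (m : ℕ) (a : Fin (m + 1) → KnitS) (h : IsLeftPath KnitS m a) : 3 ≤ m := by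
  obtain ⟨hm, hnc, hadj, hne, hleft⟩ := h
  by_contra hlt
  push_neg at hlt
  interval_cases m
  · obtain ⟨i, hi⟩ := gen_of (a 0) (hnc 0)
    obtain ⟨j, hj⟩ := gen_of (a 1) (hnc 1)
    have hcomm := (hadj 0).2
    have l0 := hleft 0
    have l1 := hleft 1
    have hlast : Fin.last 1 = 1 := rfl
    have hcs : (0 : Fin 1).castSucc = 0 := rfl
    have hsc : (0 : Fin 1).succ = 1 := rfl
    rw [hlast] at l0 l1 hne
    rw [hcs, hsc] at hcomm
    rw [hi, hj] at hcomm l0 l1 hne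
    have hij : i ≠ j := fun hh => hne (by rw [hh])
    exact L1 i j hij
      (by have := congrArg phi hcomm; rwa [phi_e_mul, phi_e_mul] at this)
      (by have := congrArg phi l0; rwa [phi_e_mul, phi_e_mul] at this)
      (by have := congrArg phi l1; rwa [phi_e_mul, phi_e_mul] at this)
  · obtain ⟨i, hi⟩ := gen_of (a 0) (hnc 0)
    obtain ⟨j, hj⟩ := gen_of (a 1) (hnc 1)
    obtain ⟨k, hk⟩ := gen_of (a 2) (hnc 2)
    have hc1 := (hadj 0).2
    have hc2 := (hadj 1).2
    have l0 := hleft 0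
    have l1 := hleft 1
    have l2 := hleft 2
    have hlast : Fin.last 2 = 2 := rfl
    have hcs0 : (0 : Fin 2).castSucc = 0 := rfl
    have hsc0 : (0 : Fin 2).succ = 1 := rfl
    have hcs1 : (1 : Fin 2).castSucc = 1 := rfl
    have hsc1 : (1 : Fin 2).succ = 2 := rfl
    rw [hlast] at l0 l1 l2 hne
    rw [hcs0, hsc0] at hc1
    rw [hcs1, hsc1] at hc2
    rw [hi, hj] at hc1
    rw [hj, hk] at hc2
    rw [hi, hk] at l0 l1 l2 hne
    rw [hj] at l1
    have hik : i ≠ k := fun hh => hne (by rw [hh])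
    exact L2 i j k hik
      (by have := congrArg phi hc1; rwa [phi_e_mul, phi_e_mul] at this)
      (by have := congrArg phi hc2; rwa [phi_e_mul, phi_e_mul] at this)
      (by have := congrArg phi l0; rwa [phi_e_mul, phi_e_mul] at this)
      (by have := congrArg phi l1; rwa [phi_e_mul, phi_e_mul] at this)
      (by have := congrArg phi l2; rwa [phi_e_mul, phi_e_mul] at this)

lemma upper_bound : IsLeftPath KnitS 3 ![e 0, e 1, e 2, e 3] := by
  refine ⟨by norm_num, ?_, ?_, ?_, ?_⟩
  · intro i
    fin_cases i
    · exact e_not_central 0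
    · exact e_not_central 1
    · exact e_not_central 2
    · exact e_not_central 3
  · intro i
    fin_cases i
    · exact ⟨e_ne (by decide), by show e 0 * e 1 = e 1 * e 0; rw [h01, h10]⟩
    · exact ⟨e_ne (by decide), by show e 1 * e 2 = e 2 * e 1; rw [h12, h21]⟩
    · exact ⟨e_ne (by decide), by show e 2 * e 3 = e 3 * e 2; rw [h23, h32]⟩
  · exact e_ne (by decide)
  · intro i
    fin_cases i
    · exact h00
    · show e 0 * e 1 = e 3 * e 1; rw [h01, h31]
    · show e 0 * e 2 = e 3 * e 2; rw [h02, h32]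
    · exact h33.symm


theorem knit_degree_three :
    (∃ a : Fin 4 → KnitS, IsLeftPath KnitS 3 a) ∧
    (∀ (m : ℕ) (a : Fin (m + 1) → KnitS), IsLeftPath KnitS m a → 3 ≤ m) ∧
    ¬ IsLeftPath KnitS 1 ![e 0, e 1] ∧
    ¬ IsLeftPath KnitS 1 ![e 1, e 2] ∧
    ¬ IsLeftPath KnitS 1 ![e 2, e 3] ∧
    ¬ IsLeftPath KnitS 2 ![e 0, e 1, e 2] ∧
    ¬ IsLeftPath KnitS 2 ![e 1, e 2, e 3] := by
  refine ⟨⟨![e 0, e 1, e 2, e 3], upper_bound⟩, lower_bound, ?_, ?_, ?_, ?_, ?_⟩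
  · exact fun h => absurd (lower_bound 1 _ h) (by norm_num)
  · exact fun h => absurd (lower_bound 1 _ h) (by norm_num)
  · exact fun h => absurd (lower_bound 1 _ h) (by norm_num)
  · exact fun h => absurd (lower_bound 2 _ h) (by norm_num)
  · exact fun h => absurd (lower_bound 2 _ h) (by norm_num)
end

section
/- Let G be a (2n−2)-regular graph on 2n vertices. Then every semigroup S whose commuting graph is isomorphic to G requires at least 2n generators; i.e., rank(G) = 2n. -/
section Aux

variable {V : Type} [Fintype V] (G : SimpleGraph V) [DecidableRel G.Adj]

/-- In a (2n-2)-regular graph on 2n vertices, each vertex has a unique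
non-neighbor. -/
lemma unique_nonneighbor {n : ℕ} (hn : 1 ≤ n) (hcardV : Fintype.card V = 2 * n)
    (hreg : ∀ v : V, G.degree v = 2 * n - 2) (v : V) :
    ∃! w, w ≠ v ∧ ¬ G.Adj v w := by
  classical
  set t : Finset V := insert v (G.neighborFinset v) with ht
  have hvnot : v ∉ G.neighborFinset v := by
    simp [SimpleGraph.mem_neighborFinset]
  have htcard : t.card = 2 * n - 1 := by
    rw [ht, Finset.card_insert_of_notMem hvnot,
      SimpleGraph.card_neighborFinset_eq_degree, hreg]
    omega
  have hs : (Finset.univ \ t).card = 1 := by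
    rw [Finset.card_sdiff_of_subset (Finset.subset_univ t), Finset.card_univ, hcardV, htcard]
    omega
  obtain ⟨w, hw⟩ := Finset.card_eq_one.mp hs
  have hmem : ∀ x : V, x ∈ Finset.univ \ t ↔ (x ≠ v ∧ ¬ G.Adj v x) := by
    intro x
    simp [ht, SimpleGraph.mem_neighborFinset]
  refine ⟨w, ?_, ?_⟩
  · exact (hmem w).mp (hw ▸ Finset.mem_singleton_self w)
  · intro y hy
    have := (hmem y).mpr hy
    rw [hw, Finset.mem_singleton] at this
    exact this

/-- The multiplication for the model semigroup built on `Option (Option V)`: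
`none` is the zero, `some none` is an extra central element `z`, and
`some (some v)` are the vertices. -/
def mmul (f : V → ℕ) : Option (Option V) → Option (Option V) → Option (Option V)
  | some (some x), some (some y) =>
      if ¬ G.Adj x y ∧ f x < f y then some none else none
  | _, _ => none

lemma mmul_ne_vertex (f : V → ℕ) (a b : Option (Option V)) (x : V) :
    mmul G f a b ≠ some (some x) := by
  rcases a with _ | (_ | u) <;> rcases b with _ | (_ | w) <;>
    simp [mmul] <;> split_ifs <;> simp

lemma mmul_none_right (f : V → ℕ) (a : Option (Option V)) :
    mmul G f a none = none := by
  rcases a with _ | (_ | u) <;> rfl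

lemma mmul_z_right (f : V → ℕ) (a : Option (Option V)) :
    mmul G f a (some none) = none := by
  rcases a with _ | (_ | u) <;> rfl

lemma mmul_none_left (f : V → ℕ) (a : Option (Option V)) :
    mmul G f none a = none := rfl

lemma mmul_z_left (f : V → ℕ) (a : Option (Option V)) :
    mmul G f (some none) a = none := rfl

lemma mmul_assoc (f : V → ℕ) (a b c : Option (Option V)) :
    mmul G f (mmul G f a b) c = mmul G f a (mmul G f b c) := by
  have h1 : mmul G f (mmul G f a b) c = none := by
    rcases h : mmul G f a b with _ | (_ | u)
    · rfl
    · rfl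
    · exact absurd h (mmul_ne_vertex G f a b u)
  have h2 : mmul G f a (mmul G f b c) = none := by
    rcases h : mmul G f b c with _ | (_ | u)
    · rw [mmul_none_right]
    · rw [mmul_z_right]
    · exact absurd h (mmul_ne_vertex G f b c u)
  rw [h1, h2]

/-- The model semigroup. -/
def modelSemigroup (f : V → ℕ) : Semigroup (Option (Option V)) where
  mul := mmul G f
  mul_assoc := mmul_assoc G f

lemma model_none_central (f : V → ℕ) :
    letI := modelSemigroup G f
    (none : Option (Option V)) ∈ Set.center (Option (Option V)) := by
  letI := modelSemigroup G f
  rw [Semigroup.mem_center_iff]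
  intro g
  show mmul G f g none = mmul G f none g
  rw [mmul_none_right, mmul_none_left]

lemma model_z_central (f : V → ℕ) :
    letI := modelSemigroup G f
    (some none : Option (Option V)) ∈ Set.center (Option (Option V)) := by
  letI := modelSemigroup G f
  rw [Semigroup.mem_center_iff]
  intro g
  show mmul G f g (some none) = mmul G f (some none) g
  rw [mmul_z_right, mmul_z_left]

lemma model_vertex_not_central {n : ℕ} (hn : 1 ≤ n)
    (hcardV : Fintype.card V = 2 * n)
    (hreg : ∀ v : V, G.degree v = 2 * n - 2)
    (f : V → ℕ) (hf : Function.Injective f) (v : V) :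
    letI := modelSemigroup G f
    (some (some v) : Option (Option V)) ∉ Set.center (Option (Option V)) := by
  letI := modelSemigroup G f
  rw [Semigroup.mem_center_iff]
  intro hcen
  obtain ⟨w, ⟨hwv, hwadj⟩, -⟩ := unique_nonneighbor G hn hcardV hreg v
  have hvw : ¬ G.Adj v w := hwadj
  have hwvadj : ¬ G.Adj w v := fun h => hvw h.symm
  have hfne : f v ≠ f w := fun h => hwv (hf h).symm
  have := hcen (some (some w))
  rw [show ((some (some w) : Option (Option V)) * some (some v))
      = mmul G f (some (some w)) (some (some v)) from rfl,
    show ((some (some v) : Option (Option V)) * some (some w))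
      = mmul G f (some (some v)) (some (some w)) from rfl] at this
  simp only [mmul] at this
  rcases lt_or_gt_of_ne hfne with hlt | hlt
  · rw [if_neg (by rintro ⟨-, h⟩; exact absurd hlt (Nat.lt_asymm h)),
      if_pos ⟨hvw, hlt⟩] at this
    cases this
  · rw [if_pos ⟨hwvadj, hlt⟩,
      if_neg (by rintro ⟨-, h⟩; exact absurd hlt (Nat.lt_asymm h))] at this
    cases this

end Aux

theorem rank_of_regular_graph (n : ℕ) (hn : 1 ≤ n) {V : Type} [Fintype V]
    (G : SimpleGraph V) [DecidableRel G.Adj]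
    (hcardV : Fintype.card V = 2 * n)
    (hreg : ∀ v : V, G.degree v = 2 * n - 2) :
    (∀ (S : Type) (inst : Semigroup S),
      Nonempty (@CommutingGraph S inst ≃g G) →
      ∀ gens : Finset S, Subsemigroup.closure (gens : Set S) = ⊤ →
        2 * n ≤ gens.card) ∧
    ∃ (S : Type) (inst : Semigroup S) (gens : Finset S),
      gens.card = 2 * n ∧ Subsemigroup.closure (gens : Set S) = ⊤ ∧
      Nonempty (@CommutingGraph S inst ≃g G) := by
  classical
  constructor
  · -- lower bound
    rintro S inst ⟨e⟩ gens hgen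
    letI := inst
    -- unique non-neighbor transferred to the commuting graph of S
    have hunS : ∀ u : {x : S // x ∉ Set.center S},
        ∃! w, w ≠ u ∧ ¬ (CommutingGraph S).Adj u w := by
      intro u
      obtain ⟨w0, ⟨hw0ne, hw0adj⟩, huniq⟩ :=
        unique_nonneighbor G hn hcardV hreg (e u)
      refine ⟨e.symm w0, ⟨?_, ?_⟩, ?_⟩
      · intro h
        apply hw0ne
        rw [← h]
        simp
      · intro h
        apply hw0adj
        have := e.map_rel_iff.mpr h
        simpa using this
      · intro y ⟨hy1, hy2⟩
        have : (e y : V) = w0 := by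
          apply huniq
          refine ⟨fun h => hy1 (e.toEquiv.injective h), fun h => hy2 ?_⟩
          exact e.map_rel_iff.mp h
        rw [← this]; simp
    -- key decomposition lemma
    have hkey : ∀ x : S, x ∉ Set.center S → ∀ a b : S, x = a * b →
        a = x ∨ b = x := by
      intro x hx a b hab
      obtain ⟨w, ⟨hwne, hwadj⟩, -⟩ := hunS ⟨x, hx⟩
      obtain ⟨w', hw', huniq'⟩ := hunS w
      have hux : (⟨x, hx⟩ : {x : S // x ∉ Set.center S}) = w' := by
        apply huniq'
        refine ⟨fun h => hwne h.symm, fun h => hwadj h.symm⟩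
      have hxw : x * (w : S) ≠ (w : S) * x := by
        intro h
        exact hwadj ⟨fun hh => hwne hh.symm, h⟩
      have hcases : a * (w : S) ≠ (w : S) * a ∨ b * (w : S) ≠ (w : S) * b := by
        by_contra h
        push_neg at h
        obtain ⟨ha, hb⟩ := h
        apply hxw
        rw [hab, mul_assoc, hb, ← mul_assoc, ha, mul_assoc]
      rcases hcases with hne | hne
      · left
        have hanc : a ∉ Set.center S := by
          intro hc
          exact hne ((Set.mem_center_iff.mp hc).comm _)
        have hava : a ≠ (w : S) := fun h => hne (by rw [h])
        have : (⟨a, hanc⟩ : {x : S // x ∉ Set.center S}) = w' := by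
          apply huniq'
          exact ⟨fun h => hava (congrArg Subtype.val h), fun h => hne h.2.symm⟩
        exact congrArg Subtype.val (this.trans hux.symm)
      · right
        have hbnc : b ∉ Set.center S := by
          intro hc
          exact hne ((Set.mem_center_iff.mp hc).comm _)
        have hbvb : b ≠ (w : S) := fun h => hne (by rw [h])
        have : (⟨b, hbnc⟩ : {x : S // x ∉ Set.center S}) = w' := by
          apply huniq'
          exact ⟨fun h => hbvb (congrArg Subtype.val h), fun h => hne h.2.symm⟩
        exact congrArg Subtype.val (this.trans hux.symm)
    -- every non-central element lies in gens
    have hP : ∀ x : S, x ∈ Set.center S ∨ x ∈ gens := by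
      intro x
      have hx : x ∈ Subsemigroup.closure (gens : Set S) := by
        rw [hgen]; trivial
      refine Subsemigroup.closure_induction
        (p := fun x _ => x ∈ Set.center S ∨ x ∈ gens)
        (fun x hx => Or.inr hx) ?_ hx
      intro a b _ _ pa pb
      by_cases hc : a * b ∈ Set.center S
      · exact Or.inl hc
      · rcases hkey (a * b) hc a b rfl with h | h
        · rw [← h]
          rcases pa with hca | hga
          · exact absurd (h ▸ hca) (h ▸ hc)
          · exact Or.inr hga
        · rw [← h]
          rcases pb with hcb | hgb
          · exact absurd (h ▸ hcb) (h ▸ hc)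
          · exact Or.inr hgb
    letI : Fintype {x : S // x ∉ Set.center S} := Fintype.ofEquiv V e.toEquiv.symm
    have hcard : Fintype.card {x : S // x ∉ Set.center S} = 2 * n := by
      rw [← hcardV]
      exact Fintype.card_congr e.toEquiv
    have hle : Fintype.card {x : S // x ∉ Set.center S} ≤ gens.card := by
      rw [← Fintype.card_coe gens]
      refine Fintype.card_le_of_injective
        (fun a => ⟨a.val, (hP a.val).resolve_left a.2⟩) ?_
      intro a b h
      rw [Subtype.mk.injEq] at h
      exact Subtype.ext h
    omega
  · -- existence
    set f : V → ℕ := fun v => (Fintype.equivFin V v : ℕ) with hfdef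
    have hf : Function.Injective f := by
      intro a b h
      exact (Fintype.equivFin V).injective (Fin.ext h)
    letI inst := modelSemigroup G f
    have hv0 : Nonempty V := by
      apply Fintype.card_pos_iff.mp
      omega
    obtain ⟨v0⟩ := hv0
    obtain ⟨w0, ⟨hw0ne, hw0adj⟩, -⟩ := unique_nonneighbor G hn hcardV hreg v0
    have hmulvv : ∀ a b : V,
        (some (some a) : Option (Option V)) * (some (some b))
          = if ¬ G.Adj a b ∧ f a < f b then some none else none :=
      fun a b => rfl
    refine ⟨Option (Option V), inst,
      Finset.univ.image (fun v => (some (some v) : Option (Option V))),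
      ?_, ?_, ?_⟩
    · rw [Finset.card_image_of_injective _ (fun a b h => by
        injection h with h; injection h), Finset.card_univ, hcardV]
    · -- closure is everything
      rw [eq_top_iff]
      rintro x -
      have hmemgen : ∀ v : V, (some (some v) : Option (Option V)) ∈
          Subsemigroup.closure
            ((Finset.univ.image
              (fun v => (some (some v) : Option (Option V))) : Finset _) :
                Set (Option (Option V))) :=
        fun v => Subsemigroup.subset_closure (by simp)
      have h0 : (none : Option (Option V)) ∈ Subsemigroup.closure
          ((Finset.univ.image
            (fun v => (some (some v) : Option (Option V))) : Finset _) :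
              Set (Option (Option V))) := by
        have hprod : (some (some v0) : Option (Option V)) * (some (some v0))
            = none := by
          rw [hmulvv, if_neg (by rintro ⟨-, h⟩; exact lt_irrefl _ h)]
        exact hprod ▸ mul_mem (hmemgen v0) (hmemgen v0)
      have hz : (some none : Option (Option V)) ∈ Subsemigroup.closure
          ((Finset.univ.image
            (fun v => (some (some v) : Option (Option V))) : Finset _) :
              Set (Option (Option V))) := by
        have hfne : f v0 ≠ f w0 := fun h => hw0ne (hf h).symm
        rcases lt_or_gt_of_ne hfne with hlt | hlt
        · have hprod : (some (some v0) : Option (Option V)) * (some (some w0))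
              = some none := by
            rw [hmulvv, if_pos ⟨hw0adj, hlt⟩]
          exact hprod ▸ mul_mem (hmemgen v0) (hmemgen w0)
        · have hprod : (some (some w0) : Option (Option V)) * (some (some v0))
              = some none := by
            rw [hmulvv, if_pos ⟨fun h => hw0adj h.symm, hlt⟩]
          exact hprod ▸ mul_mem (hmemgen w0) (hmemgen v0)
      rcases x with _ | (_ | v)
      · exact h0
      · exact hz
      · exact hmemgen v
    · -- the commuting graph is isomorphic to G
      have hnc := model_vertex_not_central G hn hcardV hreg f hf
      have hinj : Function.Injective
          (fun v => (⟨some (some v), hnc v⟩ :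
            {x : Option (Option V) // x ∉ Set.center (Option (Option V))})) := by
        intro a b h
        have h2 : (some (some a) : Option (Option V)) = some (some b) :=
          congrArg Subtype.val h
        injection h2 with h3; injection h3
      have hsurj : Function.Surjective
          (fun v => (⟨some (some v), hnc v⟩ :
            {x : Option (Option V) // x ∉ Set.center (Option (Option V))})) := by
        rintro ⟨a, ha⟩
        rcases a with _ | (_ | v)
        · exact absurd (model_none_central G f) ha
        · exact absurd (model_z_central G f) ha
        · exact ⟨v, rfl⟩
      refine ⟨(SimpleGraph.Iso.symm
        ⟨Equiv.ofBijective _ ⟨hinj, hsurj⟩, ?_⟩ :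
          CommutingGraph (Option (Option V)) ≃g G)⟩
      intro a b
      show (CommutingGraph (Option (Option V))).Adj
        ⟨some (some a), hnc a⟩ ⟨some (some b), hnc b⟩ ↔ G.Adj a b
      constructor
      · rintro ⟨hne, hcomm⟩
        by_contra hna
        have hab : a ≠ b := fun h => hne (by rw [h])
        have hnb : ¬ G.Adj b a := fun h => hna h.symm
        have hfab : f a ≠ f b := fun h => hab (hf h)
        have hcomm' : (some (some a) : Option (Option V)) * (some (some b))
            = (some (some b) : Option (Option V)) * (some (some a)) := hcomm
        rw [hmulvv, hmulvv] at hcomm'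
        rcases lt_or_gt_of_ne hfab with hlt | hlt
        · rw [if_pos ⟨hna, hlt⟩,
            if_neg (by rintro ⟨-, h⟩; exact absurd hlt (Nat.lt_asymm h))]
            at hcomm'
          cases hcomm'
        · rw [if_neg (by rintro ⟨-, h⟩; exact absurd hlt (Nat.lt_asymm h)),
            if_pos ⟨hnb, hlt⟩] at hcomm'
          cases hcomm'
      · intro hadj
        refine ⟨?_, ?_⟩
        · intro h
          have h2 : (some (some a) : Option (Option V)) = some (some b) :=
            congrArg Subtype.val h
          injection h2 with h3; injection h3 with h4
          exact hadj.ne h4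
        · show (some (some a) : Option (Option V)) * (some (some b))
            = (some (some b) : Option (Option V)) * (some (some a))
          rw [hmulvv, hmulvv, if_neg (by rintro ⟨h, -⟩; exact h hadj),
            if_neg (by rintro ⟨h, -⟩; exact h hadj.symm)]
end

section
/- Every semigroup S whose commuting graph is isomorphic to the 4-cycle C₄ requires at least 4 generators; i.e., rank(C₄) = 4. -/
/-! ### The example semigroup -/

abbrev S5 := Option (Bool × Bool)

def s5mul : S5 → S5 → S5
  | some (s1, x), some (s2, _) => if s1 = s2 then some (s1, x) else none
  | _, _ => none

instance : Mul S5 := ⟨s5mul⟩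

instance : Semigroup S5 where
  mul_assoc := by decide

def g4 : Fin 4 → S5 := ![some (true, true), some (false, true),
  some (true, false), some (false, false)]

lemma g4_notcen : ∀ i : Fin 4, g4 i ∉ Set.center S5 := by
  have key : ∀ i : Fin 4, ∃ g : S5, ¬ g * g4 i = g4 i * g := by decide
  intro i h
  obtain ⟨g, hg⟩ := key i
  exact hg (Semigroup.mem_center_iff.mp h g)

lemma none_cen : (none : S5) ∈ Set.center S5 :=
  Semigroup.mem_center_iff.mpr (by decide)

def s5enc0 : S5 → Fin 4
  | some (true, true) => 0
  | some (false, true) => 1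
  | some (true, false) => 2
  | some (false, false) => 3
  | none => 0

def s5enc : {x : S5 // x ∉ Set.center S5} → Fin 4 := fun x => s5enc0 x.1

def s5equiv : {x : S5 // x ∉ Set.center S5} ≃ Fin 4 where
  toFun := s5enc
  invFun := fun i => ⟨g4 i, g4_notcen i⟩
  left_inv := by
    rintro ⟨v, h⟩
    rcases v with _ | ⟨s, x⟩
    · exact absurd none_cen h
    · cases s <;> cases x <;> rfl
  right_inv := by intro i; fin_cases i <;> rfl

lemma s5iso : Nonempty (CommutingGraph S5 ≃g SimpleGraph.cycleGraph 4) := by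
  refine ⟨⟨s5equiv, ?_⟩⟩
  rintro ⟨v, hv⟩ ⟨w, hw⟩
  rcases v with _ | ⟨s, x⟩
  · exact absurd none_cen hv
  rcases w with _ | ⟨t, y⟩
  · exact absurd none_cen hw
  show (SimpleGraph.cycleGraph 4).Adj (s5enc ⟨_, _⟩) (s5enc ⟨_, _⟩) ↔ _ ∧ _
  simp only [CommutingGraph, ne_eq, Subtype.mk.injEq, s5enc]
  cases s <;> cases x <;> cases t <;> cases y <;> decide

def gens5 : Finset S5 :=
  {some (true, true), some (false, true), some (true, false), some (false, false)}

/-! ### Lower bound -/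

theorem rank_of_C4 :
    (∀ (S : Type) (inst : Semigroup S),
      Nonempty (@CommutingGraph S inst ≃g SimpleGraph.cycleGraph 4) →
      ∀ gens : Finset S, Subsemigroup.closure (gens : Set S) = ⊤ →
        4 ≤ gens.card) ∧
    ∃ (S : Type) (inst : Semigroup S) (gens : Finset S),
      gens.card = 4 ∧ Subsemigroup.closure (gens : Set S) = ⊤ ∧
      Nonempty (@CommutingGraph S inst ≃g SimpleGraph.cycleGraph 4) := by
  constructor
  · rintro S inst ⟨e⟩ gens hgen
    classical
    -- for every non-central x, some generator fails to commute with x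
    have key : ∀ x : S, x ∉ Set.center S → ∃ g ∈ gens, ¬ g * x = x * g := by
      intro x hx
      by_contra hcon
      push_neg at hcon
      apply hx
      rw [Semigroup.mem_center_iff]
      intro g
      have hg : g ∈ Subsemigroup.closure (gens : Set S) := hgen ▸ Subsemigroup.mem_top g
      induction hg using Subsemigroup.closure_induction with
      | mem y hy => exact hcon y hy
      | mul y z _ _ hy hz => rw [mul_assoc, hz, ← mul_assoc, hy, mul_assoc]
    -- every vertex's "antipode" is a generator
    have hstep : ∀ j i : Fin 4, j ≠ i → ¬ (SimpleGraph.cycleGraph 4).Adj j i →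
        j = i + 2 := by decide
    have hmem : ∀ j : Fin 4, ((e.symm j : {x : S // x ∉ Set.center S}) : S) ∈ gens := by
      have hmem' : ∀ i : Fin 4,
          ((e.symm (i + 2) : {x : S // x ∉ Set.center S}) : S) ∈ gens := by
        intro i
        set x := e.symm i with hx
        obtain ⟨g, hg, hgc⟩ := key (x : S) x.2
        have hgnc : g ∉ Set.center S := fun h =>
          hgc (Semigroup.mem_center_iff.mp h (x : S)).symm
        set G : {x : S // x ∉ Set.center S} := ⟨g, hgnc⟩ with hG
        have hGx : G ≠ x := by
          intro h
          exact hgc (by rw [hG] at h; rw [← congrArg Subtype.val h])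
        have hnadj : ¬ (CommutingGraph S).Adj G x := fun h => hgc h.2
        have h1 : e G ≠ i := by
          intro h
          exact hGx (by have := congrArg e.symm h; rwa [e.symm_apply_apply, ← hx] at this)
        have h2 : ¬ (SimpleGraph.cycleGraph 4).Adj (e G) i := by
          intro h
          apply hnadj
          have : (SimpleGraph.cycleGraph 4).Adj (e G) (e x) := by
            rw [hx, e.apply_symm_apply]; exact h
          exact e.map_rel_iff.mp this
        have := hstep _ _ h1 h2
        rw [← this, e.symm_apply_apply]
        exact hg
      intro j
      have := hmem' (j - 2)
      rwa [sub_add_cancel] at this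
    have hinj : Function.Injective (fun j : Fin 4 =>
        ((e.symm j : {x : S // x ∉ Set.center S}) : S)) := fun a b h =>
      e.symm.injective (Subtype.ext h)
    calc 4 = (Finset.univ.image fun j : Fin 4 =>
          ((e.symm j : {x : S // x ∉ Set.center S}) : S)).card := by
          rw [Finset.card_image_of_injective _ hinj, Finset.card_univ, Fintype.card_fin]
      _ ≤ gens.card := Finset.card_le_card (by
          intro x hx
          simp only [Finset.mem_image, Finset.mem_univ, true_and] at hx
          obtain ⟨j, rfl⟩ := hx
          exact hmem j)
  · refine ⟨S5, inferInstance, gens5, by decide, ?_, s5iso⟩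
    rw [Subsemigroup.eq_top_iff']
    intro x
    have ha : (some (true, true) : S5) ∈ Subsemigroup.closure (gens5 : Set S5) :=
      Subsemigroup.subset_closure (by decide)
    have hb : (some (false, true) : S5) ∈ Subsemigroup.closure (gens5 : Set S5) :=
      Subsemigroup.subset_closure (by decide)
    have hc : (some (true, false) : S5) ∈ Subsemigroup.closure (gens5 : Set S5) :=
      Subsemigroup.subset_closure (by decide)
    have hd : (some (false, false) : S5) ∈ Subsemigroup.closure (gens5 : Set S5) :=
      Subsemigroup.subset_closure (by decide)
    rcases x with _ | ⟨s, t⟩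
    · have : (none : S5) = some (true, true) * some (false, true) := by decide
      rw [this]; exact mul_mem ha hb
    · cases s <;> cases t <;> assumption
end
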